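/- Let X be a Banach space with X = E ⊕ K (topological direct sum), dim K < ∞, let Ω ⊆ X be open convex, f : Ω → ℝ continuous convex, L > 0, and α ∈ K*. Let A_{α,L} := {x ∈ Ω : there exists p_x in the subdifferential ∂f(x) with ‖p_x‖ ≤ L and p_x restricted to K equals α}. Then there exists a Lipschitz convex function g on E such that f(x) − α(π_K(x)) = g(π_E(x)) for each x ∈ A_{α,L}. -/
import Mathlib


open Set
open scoped NNReal

noncomputable section

/-- Projection lemma for convex functions with a fixed partial subgradient. -/
theorem stmt7 {X : Type*} [NormedAddCommGroup X] [NormedSpace ℝ X] [CompleteSpace X]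
    (E K : Submodule ℝ X) (hEK : IsCompl E K) [FiniteDimensional ℝ K]
    (πE πK : X →L[ℝ] X)
    (hπE : ∀ x, πE x ∈ E) (hπK : ∀ x, πK x ∈ K) (hsum : ∀ x, πE x + πK x = x)
    (Ω : Set X) (hΩopen : IsOpen Ω) (hΩconv : Convex ℝ Ω)
    (f : X → ℝ) (hf : ConvexOn ℝ Ω f) (hfc : ContinuousOn f Ω)
    (L : ℝ) (hL : 0 < L) (α : X →L[ℝ] ℝ) :
    ∃ g : X → ℝ, ConvexOn ℝ univ g ∧ (∃ C : ℝ≥0, LipschitzWith C g) ∧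
      ∀ x ∈ {x ∈ Ω | ∃ p : X →L[ℝ] ℝ, ‖p‖ ≤ L ∧
          (∀ y ∈ Ω, p (y - x) ≤ f y - f x) ∧ (∀ v ∈ K, p v = α v)},
        f x - α (πK x) = g (πE x) := by
  classical
  set F : X → ℝ := fun x => f x - α (πK x) with hFdef
  set T : Set (X × (X →L[ℝ] ℝ)) :=
    {xp | xp.1 ∈ Ω ∧ ‖xp.2‖ ≤ L ∧ (∀ y ∈ Ω, xp.2 (y - xp.1) ≤ f y - f xp.1) ∧
      (∀ v ∈ K, xp.2 v = α v)} with hTdef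
  by_cases hNE : T.Nonempty
  · obtain ⟨⟨x0, p0⟩, hx0T⟩ := hNE
    set t : X × (X →L[ℝ] ℝ) → X → ℝ := fun xp e => F xp.1 + xp.2 (e - πE xp.1) with htdef
    -- key inequality
    have key : ∀ xp ∈ T, ∀ yq ∈ T, t xp (πE yq.1) ≤ F yq.1 := by
      rintro ⟨x, p⟩ ⟨hxΩ, hpL, hpsub, hpK⟩ ⟨y, q⟩ ⟨hyΩ, -, -, -⟩
      have h1 : p (y - x) ≤ f y - f x := hpsub y hyΩ
      have hdecomp : (πE y - πE x) + (πK y - πK x) = y - x := by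
        have hx := hsum x
        have hy := hsum y
        calc (πE y - πE x) + (πK y - πK x) = (πE y + πK y) - (πE x + πK x) := by abel
          _ = y - x := by rw [hx, hy]
      have hK : p (πK y - πK x) = α (πK y) - α (πK x) := by
        rw [hpK _ (sub_mem (hπK y) (hπK x)), map_sub]
      have h2 : p (πE y - πE x) + (α (πK y) - α (πK x)) ≤ f y - f x := by
        rw [← hK, ← map_add, hdecomp]; exact h1
      simp only [htdef, hFdef]
      linarith
    have hmem : ∀ xp ∈ T, ∀ e : X, t xp e ∈ (fun xp => t xp e) '' T := by
      intro xp hxp e; exact ⟨xp, hxp, rfl⟩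
    have hne : ∀ e : X, ((fun xp => t xp e) '' T).Nonempty :=
      fun e => ⟨t (x0, p0) e, hmem _ hx0T e⟩
    have hterm_bound : ∀ xp ∈ T, ∀ e e' : X, t xp e ≤ t xp e' + L * ‖e - e'‖ := by
      rintro ⟨x, p⟩ hxp e e'
      have hsplit : p (e - πE x) = p (e' - πE x) + p (e - e') := by
        rw [← map_add]; congr 1; abel
      have hb : p (e - e') ≤ L * ‖e - e'‖ := by
        calc p (e - e') ≤ ‖p (e - e')‖ := le_abs_self _
          _ ≤ ‖p‖ * ‖e - e'‖ := p.le_opNorm _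
          _ ≤ L * ‖e - e'‖ := by
            exact mul_le_mul_of_nonneg_right hxp.2.1 (norm_nonneg _)
      simp only [htdef]
      linarith
    have hbdd : ∀ e : X, BddAbove ((fun xp => t xp e) '' T) := by
      intro e
      refine ⟨F x0 + L * ‖e - πE x0‖, ?_⟩
      rintro z ⟨xp, hxp, rfl⟩
      calc t xp e ≤ t xp (πE x0) + L * ‖e - πE x0‖ := hterm_bound xp hxp e (πE x0)
        _ ≤ F x0 + L * ‖e - πE x0‖ := by linarith [key xp hxp (x0, p0) hx0T]
    set g : X → ℝ := fun e => sSup ((fun xp => t xp e) '' T) with hgdef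
    have hle_g : ∀ xp ∈ T, ∀ e : X, t xp e ≤ g e :=
      fun xp hxp e => le_csSup (hbdd e) (hmem xp hxp e)
    have hg_le : ∀ e e' : X, g e ≤ g e' + L * ‖e - e'‖ := by
      intro e e'
      refine csSup_le (hne e) ?_
      rintro z ⟨xp, hxp, rfl⟩
      calc t xp e ≤ t xp e' + L * ‖e - e'‖ := hterm_bound xp hxp e e'
        _ ≤ g e' + L * ‖e - e'‖ := by linarith [hle_g xp hxp e']
    refine ⟨g, ?_, ?_, ?_⟩
    · -- convexity
      refine ⟨convex_univ, fun x _ y _ a b ha hb hab => ?_⟩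
      refine csSup_le (hne _) ?_
      rintro z ⟨⟨u, p⟩, hup, rfl⟩
      have harg : a • x + b • y - πE u = a • (x - πE u) + b • (y - πE u) := by
        calc a • x + b • y - πE u = a • x + b • y - (a + b) • πE u := by
              rw [hab, one_smul]
          _ = a • (x - πE u) + b • (y - πE u) := by
              rw [add_smul, smul_sub, smul_sub]; abel
      have hval : t (u, p) (a • x + b • y)
          = a * t (u, p) x + b * t (u, p) y := by
        simp only [htdef, harg, map_add, map_smul, smul_eq_mul]
        have : F u = a * F u + b * F u := by rw [← add_mul, hab, one_mul]
        linarith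
      have h1 : t (u, p) x ≤ g x := hle_g _ hup x
      have h2 : t (u, p) y ≤ g y := hle_g _ hup y
      calc t (u, p) (a • x + b • y) = a * t (u, p) x + b * t (u, p) y := hval
        _ ≤ a * g x + b * g y := by
            exact add_le_add (mul_le_mul_of_nonneg_left h1 ha)
              (mul_le_mul_of_nonneg_left h2 hb)
        _ = a • g x + b • g y := by simp [smul_eq_mul]
    · -- Lipschitz
      refine ⟨L.toNNReal, LipschitzWith.of_dist_le_mul fun e e' => ?_⟩
      rw [Real.coe_toNNReal L hL.le, Real.dist_eq, dist_eq_norm]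
      have h1 := hg_le e e'
      have h2 := hg_le e' e
      have h3 : ‖e' - e‖ = ‖e - e'‖ := norm_sub_rev _ _
      rw [h3] at h2
      rw [abs_sub_le_iff]
      constructor <;> linarith
    · -- equality on A
      rintro x ⟨hxΩ, p, hpL, hpsub, hpK⟩
      have hxT : (x, p) ∈ T := ⟨hxΩ, hpL, hpsub, hpK⟩
      have hub : g (πE x) ≤ F x := by
        refine csSup_le (hne _) ?_
        rintro z ⟨xp, hxp, rfl⟩
        exact key xp hxp (x, p) hxT
      have hlb : F x ≤ g (πE x) := by
        have : t (x, p) (πE x) = F x := by simp [htdef]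
        rw [← this]; exact hle_g _ hxT _
      exact le_antisymm hlb hub
  · refine ⟨fun _ => 0, convexOn_const 0 convex_univ, ⟨0, LipschitzWith.const 0⟩, ?_⟩
    rintro x ⟨hxΩ, p, hpL, hpsub, hpK⟩
    exact absurd ⟨(x, p), hxΩ, hpL, hpsub, hpK⟩ hNE
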